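/- There exists a universal constant C > 0 such that for every real p ≥ 1, every integer W ≥ 1, and all integers m ≤ λ, the double sum over integers a ≤ m and integers b > λ of exp(−(b − a)^p / W^p) is at most C·W²·exp(−(λ − m)^p / W^p). -/

import Mathlib

open Finset

set_option maxHeartbeats 1000000

private lemma rpow_ge_sub_one {u p : ℝ} (hu : 0 ≤ u) (hp : 1 ≤ p) : u - 1 ≤ u ^ p := by
  rcases le_or_gt u 1 with h | h
  · have : (0:ℝ) ≤ u ^ p := Real.rpow_nonneg hu p
    linarith
  · have h1 : u ^ (1:ℝ) ≤ u ^ p := Real.rpow_le_rpow_of_exponent_le h.le hp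
    rw [Real.rpow_one] at h1
    linarith

private lemma rpow_superadd {x y p : ℝ} (hx : 0 ≤ x) (hy : 0 ≤ y) (hp : 1 ≤ p) :
    x ^ p + y ^ p ≤ (x + y) ^ p := by
  have h := NNReal.add_rpow_le_rpow_add (⟨x, hx⟩ : NNReal) ⟨y, hy⟩ hp
  have h2 := NNReal.coe_le_coe.mpr h
  exact h2

private def eLe (m : ℤ) : ℕ ≃ {a : ℤ // a ≤ m} where
  toFun n := ⟨m - n, by omega⟩
  invFun a := (m - a.1).toNat
  left_inv n := by simp
  right_inv a := by
    ext
    have := a.2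
    simp only
    rw [Int.toNat_of_nonneg (by omega)]
    ring

private def eGt (lam : ℤ) : ℕ ≃ {b : ℤ // lam < b} where
  toFun n := ⟨lam + 1 + n, by omega⟩
  invFun b := (b.1 - lam - 1).toNat
  left_inv n := by simp only; omega
  right_inv b := by
    ext
    have := b.2
    simp only
    rw [Int.toNat_of_nonneg (by omega)]
    ring

/-- There is a universal constant `C > 0` such that for every real
`p ≥ 1`, every integer `W ≥ 1` and all integers `m ≤ λ`,
`Σ_{a ≤ m} Σ_{b > λ} exp(-(b-a)^p / W^p) ≤ C W² exp(-(λ-m)^p / W^p)`. -/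
theorem geometric_tail_double_sum :
    ∃ C : ℝ, 0 < C ∧ ∀ (p : ℝ), 1 ≤ p → ∀ (W : ℕ), 1 ≤ W →
      ∀ m lam : ℤ, m ≤ lam →
        ∑' x : {a : ℤ // a ≤ m} × {b : ℤ // lam < b},
            Real.exp (-(((x.2 : ℤ) - (x.1 : ℤ) : ℤ) : ℝ) ^ p / (W : ℝ) ^ p) ≤
          C * W ^ 2 * Real.exp (-((lam - m : ℤ) : ℝ) ^ p / (W : ℝ) ^ p) := by
  refine ⟨4 * Real.exp 1, by positivity, ?_⟩
  intro p hp W hW m lam hm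
  have hW0 : (0:ℝ) < W := by exact_mod_cast hW
  have hW1 : (1:ℝ) ≤ W := by exact_mod_cast hW
  set d : ℝ := ((lam - m : ℤ) : ℝ) with hd_def
  have hd0 : 0 ≤ d := by
    simp only [hd_def]
    exact_mod_cast sub_nonneg.mpr hm
  set r : ℝ := Real.exp (-(1:ℝ)/W) with hr_def
  have hr0 : 0 ≤ r := Real.exp_nonneg _
  have hr1 : r < 1 := by
    rw [hr_def, Real.exp_lt_one_iff]
    exact div_neg_of_neg_of_pos (by norm_num) hW0
  -- 1 - r ≥ 1/(2W)
  have hgap : 1/(2*(W:ℝ)) ≤ 1 - r := by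
    have hx : (0:ℝ) < 1/W := by positivity
    have hx1 : (1:ℝ)/W ≤ 1 := by
      rw [div_le_one hW0]; exact hW1
    have hexp : 1/(W:ℝ) + 1 ≤ Real.exp (1/W) := Real.add_one_le_exp _
    have hb : (0:ℝ) < 1 + 1/W := by positivity
    have hrle : r ≤ (1 + 1/(W:ℝ))⁻¹ := by
      rw [hr_def, neg_div, Real.exp_neg]
      exact inv_anti₀ hb (by linarith)
    have h2 : (1 + 1/(W:ℝ))⁻¹ ≤ 1 - 1/(2*W) := by
      have e1 : (1:ℝ)/(2*W) = (1/W)/2 := by ring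
      rw [← one_div, div_le_iff₀ hb, e1]
      nlinarith [mul_le_of_le_one_right hx.le hx1]
    linarith
  have hSinv : (1 - r)⁻¹ ≤ 2 * W := by
    rw [inv_le_comm₀ (by linarith [hgap, hW0]; ) (by positivity)]
    calc (2 * (W:ℝ))⁻¹ = 1/(2*W) := by rw [one_div]
    _ ≤ 1 - r := hgap
  set E : ℝ := Real.exp (-d ^ p / (W:ℝ) ^ p) with hE_def
  have hE0 : 0 ≤ E := Real.exp_nonneg _
  set K : ℝ := Real.exp 1 * E * r with hK_def
  have hK0 : 0 ≤ K := by positivity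
  -- reindex
  rw [← Equiv.tsum_eq ((eLe m).prodCongr (eGt lam))]
  set f : ℕ × ℕ → ℝ := fun ij =>
    Real.exp (-((((lam + 1 + (ij.2:ℤ)) - (m - (ij.1:ℤ))) : ℤ) : ℝ) ^ p / (W:ℝ) ^ p) with hf_def
  have hfval : ∀ ij : ℕ × ℕ,
      ((eLe m).prodCongr (eGt lam) ij).1.1 = m - ij.1 ∧
      ((eLe m).prodCongr (eGt lam) ij).2.1 = lam + 1 + ij.2 := by
    intro ij
    constructor <;> rfl
  have hre : (fun ij : ℕ × ℕ => Real.exp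
      (-(((((eLe m).prodCongr (eGt lam) ij).2.1 : ℤ) - (((eLe m).prodCongr (eGt lam) ij).1.1 : ℤ) : ℤ) : ℝ) ^ p / (W : ℝ) ^ p)) = f := by
    funext ij
    simp only [hf_def, (hfval ij).1, (hfval ij).2]
  -- pointwise bound
  set g : ℕ × ℕ → ℝ := fun ij => K * (r ^ ij.1 * r ^ ij.2) with hg_def
  have hfg : ∀ ij : ℕ × ℕ, f ij ≤ g ij := by
    intro ⟨i, j⟩
    simp only [hf_def, hg_def, hK_def, hE_def, hr_def]
    have hrpow : ∀ n : ℕ, Real.exp (-(1:ℝ)/W) ^ n = Real.exp (-(n:ℝ)/W) := by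
      intro n
      rw [← Real.exp_nat_mul]
      ring_nf
    rw [hrpow, hrpow, ← Real.exp_add, ← Real.exp_add, ← Real.exp_add, ← Real.exp_add]
    apply Real.exp_le_exp.mpr
    have hcast : ((((lam + 1 + (j:ℤ)) - (m - (i:ℤ))) : ℤ) : ℝ) = d + ((i:ℝ) + (j:ℝ) + 1) := by
      simp only [hd_def]; push_cast; ring
    rw [hcast]
    set s : ℝ := (i:ℝ) + (j:ℝ) + 1 with hs_def
    have hs0 : (0:ℝ) < s := by positivity
    have hWp : (0:ℝ) < (W:ℝ) ^ p := Real.rpow_pos_of_pos hW0 p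
    have hsuper : d ^ p + s ^ p ≤ (d + s) ^ p :=
      rpow_superadd hd0 hs0.le hp
    have hsW : s/W - 1 ≤ (s/W) ^ p := rpow_ge_sub_one (by positivity) hp
    have hdiv : (s/W) ^ p = s ^ p / (W:ℝ) ^ p := Real.div_rpow hs0.le hW0.le p
    rw [hdiv] at hsW
    have key : d ^ p / (W:ℝ)^p + s/W - 1 ≤ (d + s) ^ p / (W:ℝ)^p := by
      have h1 : d ^ p / (W:ℝ)^p + s ^ p / (W:ℝ)^p ≤ (d+s)^p / (W:ℝ)^p := by
        rw [← add_div]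
        exact div_le_div_of_nonneg_right hsuper hWp.le
      linarith
    have h1 : (i:ℝ)/W + (j:ℝ)/W + 1/W = s/W := by rw [hs_def]; ring
    simp only [neg_div]
    linarith
  have hf0 : ∀ ij, 0 ≤ f ij := fun ij => Real.exp_nonneg _
  have hsumr : Summable (fun n : ℕ => r ^ n) := summable_geometric_of_lt_one hr0 hr1
  have hsumg : Summable g := by
    apply Summable.mul_left
    exact (hsumr.mul_of_nonneg hsumr (fun n => pow_nonneg hr0 n) (fun n => pow_nonneg hr0 n))
  have hsumf : Summable f := hsumg.of_nonneg_of_le hf0 hfg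
  rw [hre]
  have htg : ∑' ij, g ij = K * ((1-r)⁻¹ * (1-r)⁻¹) := by
    rw [hg_def]
    rw [tsum_mul_left]
    congr 1
    have hinner : ∀ i : ℕ, Summable (fun j : ℕ => r ^ i * r ^ j) := fun i => hsumr.mul_left _
    rw [Summable.tsum_prod' (hsumr.mul_of_nonneg hsumr (fun n => pow_nonneg hr0 n)
      (fun n => pow_nonneg hr0 n)) hinner]
    simp only [tsum_mul_left, tsum_geometric_of_lt_one hr0 hr1]
    rw [tsum_mul_right, tsum_geometric_of_lt_one hr0 hr1]
  calc ∑' ij, f ij ≤ ∑' ij, g ij := Summable.tsum_le_tsum hfg hsumf hsumg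
  _ = K * ((1-r)⁻¹ * (1-r)⁻¹) := htg
  _ ≤ (Real.exp 1 * E) * ((2*W) * (2*W)) := by
      have hK' : K ≤ Real.exp 1 * E :=
        mul_le_of_le_one_right (mul_nonneg (Real.exp_nonneg 1) hE0) hr1.le
      have hI0 : 0 ≤ (1-r)⁻¹ := inv_nonneg.mpr (by linarith)
      have h2W : (0:ℝ) ≤ 2*W := by positivity
      apply mul_le_mul hK' _ (mul_nonneg hI0 hI0) (mul_nonneg (Real.exp_nonneg 1) hE0)
      exact mul_le_mul hSinv hSinv hI0 h2W
  _ = 4 * Real.exp 1 * W ^ 2 * E := by ring
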